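/- arXiv:1806.03328 — 2 statements merged into one kernel-verified Lean document; each statement's English description precedes it below -/
import Mathlib

section
/- Let A : {0,...,T} → ℝ≥1 be a deterministic nondecreasing process with A(0)=1, let S(u,τ) = ∏_{i=u}^{τ-1} X_i with X_i i.i.d. positive random variables satisfying E[X_1^{-s}] = V(s) < ∞ for some s > 0, and let x_1 ≥ 0 and w ≥ 0, τ = t + w. Define the departure process by D(τ) ≥ min_{0≤u≤τ} { S(u,τ) · A(u) · A^c(u) } where A^c(0)=1 and A^c(u)=e^{x_1} for u ≥ 1. Then the delay violation probability P(W(t) > w) = P(D(τ) < A(t)·e^{x_1}) satisfies P(W(t) > w) ≤ A(t)^s e^{s x_1} V(s)^τ + ∑_{u=1}^{t-1} (A(t)/A(u))^s V(s)^{τ-u}. -/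
open MeasureTheory

/-- Chernoff/Markov-type bound: if `f ≥ 1` and `∫ f^{-s} = M`, then
`P(f < c) ≤ c^s M`. -/
lemma wtb_markov_lt {Ω : Type*} [MeasurableSpace Ω] (μ : Measure Ω)
    [IsProbabilityMeasure μ]
    (f : Ω → ℝ) (hf : Measurable f) (hf1 : ∀ ω, 1 ≤ f ω)
    (s c M : ℝ) (hs : 0 < s) (hc : 0 < c)
    (hM : ∫ ω, f ω ^ (-s) ∂μ = M) :
    (μ {ω | f ω < c}).toReal ≤ c ^ s * M := by
  have hfpos : ∀ ω, 0 < f ω := fun ω => lt_of_lt_of_le one_pos (hf1 ω)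
  have hmeas : Measurable fun ω => f ω ^ (-s) := by
    have heq : (fun ω => f ω ^ (-s))
        = fun ω => Real.exp (Real.log (f ω) * (-s)) := by
      funext ω; exact Real.rpow_def_of_pos (hfpos ω) _
    rw [heq]
    exact Real.measurable_exp.comp ((Real.measurable_log.comp hf).mul_const _)
  have hint : Integrable (fun ω => f ω ^ (-s)) μ := by
    refine (integrable_const (1 : ℝ)).mono' hmeas.aestronglyMeasurable
      (Filter.Eventually.of_forall fun ω => ?_)
    rw [Real.norm_eq_abs, abs_of_nonneg (Real.rpow_nonneg (hfpos ω).le _)]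
    exact Real.rpow_le_one_of_one_le_of_nonpos (hf1 ω) (neg_nonpos.mpr hs.le)
  have hset : MeasurableSet {ω | f ω < c} := measurableSet_lt hf measurable_const
  have hind : (μ {ω | f ω < c}).toReal
      = ∫ ω, Set.indicator {ω | f ω < c} (fun _ => (1 : ℝ)) ω ∂μ := by
    rw [integral_indicator_const (1 : ℝ) hset]
    simp
    rfl
  have hpt : ∀ ω, Set.indicator {ω | f ω < c} (fun _ => (1 : ℝ)) ω
      ≤ c ^ s * f ω ^ (-s) := by
    intro ω
    by_cases h : f ω < c
    · rw [Set.indicator_of_mem (show ω ∈ {ω | f ω < c} from h)]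
      have h1 : c ^ (-s) ≤ f ω ^ (-s) :=
        Real.rpow_le_rpow_of_nonpos (hfpos ω) h.le (neg_nonpos.mpr hs.le)
      have h2 : c ^ s * c ^ (-s) = 1 := by
        rw [← Real.rpow_add hc]; simp
      calc (1 : ℝ) = c ^ s * c ^ (-s) := h2.symm
        _ ≤ c ^ s * f ω ^ (-s) :=
          mul_le_mul_of_nonneg_left h1 (Real.rpow_nonneg hc.le _)
    · rw [Set.indicator_of_notMem (show ω ∉ {ω | f ω < c} from h)]
      exact mul_nonneg (Real.rpow_nonneg hc.le _) (Real.rpow_nonneg (hfpos ω).le _)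
  calc (μ {ω | f ω < c}).toReal
      = ∫ ω, Set.indicator {ω | f ω < c} (fun _ => (1 : ℝ)) ω ∂μ := hind
    _ ≤ ∫ ω, c ^ s * f ω ^ (-s) ∂μ :=
        integral_mono ((integrable_const (1 : ℝ)).indicator hset) (hint.const_mul _) hpt
    _ = c ^ s * M := by rw [integral_const_mul, hM]

/-- Single-hop Wireless Transient Bound (Theorem 3): for a single wireless link
with deterministic SNR-domain arrivals `A`, initial backlog `x₁` (modeled by the
cross-traffic `A^c(0)=1`, `A^c(u)=e^{x₁}` for `u ≥ 1`), dynamic-server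
departures `D` and i.i.d. SNR-domain service increments `X` with Mellin
transform `V`,
`P(W(t) > w) = P(D(τ) < A(t)e^{x₁}) ≤ A(t)^s e^{s x₁} V^τ + ∑_{u=1}^{t-1} (A(t)/A(u))^s V^{τ-u}`. -/
theorem wtb_single_hop {Ω : Type*} [MeasurableSpace Ω] (μ : Measure Ω)
    [IsProbabilityMeasure μ]
    (A : ℕ → ℝ) (hA0 : A 0 = 1) (hAmono : Monotone A)
    (X : ℕ → Ω → ℝ) (hX1 : ∀ i ω, 1 ≤ X i ω) (hXmeas : ∀ i, Measurable (X i))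
    (s V : ℝ) (hs : 0 < s) (hV : 0 < V)
    (t w τ : ℕ) (ht : 1 ≤ t) (hτ : τ = t + w)
    (hMellin : ∀ u ≤ τ, ∫ ω, (∏ i ∈ Finset.Ico u τ, X i ω) ^ (-s) ∂μ = V ^ (τ - u))
    (x₁ : ℝ) (hx₁ : 0 ≤ x₁)
    (D : Ω → ℝ) (hDmeas : Measurable D)
    (hD : ∀ ω, ∃ u ≤ τ, (∏ i ∈ Finset.Ico u τ, X i ω) * A u *
        (if u = 0 then 1 else Real.exp x₁) ≤ D ω) :
    (μ {ω | D ω < A t * Real.exp x₁}).toReal ≤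
      A t ^ s * Real.exp (s * x₁) * V ^ τ +
        ∑ u ∈ Finset.Ico 1 t, (A t / A u) ^ s * V ^ (τ - u) := by
  set S : ℕ → Ω → ℝ := fun u ω => ∏ i ∈ Finset.Ico u τ, X i ω with hSdef
  have hS1 : ∀ u ω, 1 ≤ S u ω := fun u ω => by
    show (1 : ℝ) ≤ ∏ i ∈ Finset.Ico u τ, X i ω
    calc (1 : ℝ) = ∏ _i ∈ Finset.Ico u τ, (1 : ℝ) := by simp
      _ ≤ ∏ i ∈ Finset.Ico u τ, X i ω :=
        Finset.prod_le_prod (fun i _ => zero_le_one) (fun i _ => hX1 i ω)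
  have hSmeas : ∀ u, Measurable (S u) := fun u =>
    Finset.measurable_prod _ fun i _ => hXmeas i
  have hA1 : ∀ u, 1 ≤ A u := fun u => by
    simpa [hA0] using hAmono (Nat.zero_le u)
  have hApos : ∀ u, 0 < A u := fun u => lt_of_lt_of_le one_pos (hA1 u)
  have hexp : 0 < Real.exp x₁ := Real.exp_pos x₁
  have htτ : t ≤ τ := by omega
  -- union bound over the minimizing index
  have hsub : {ω | D ω < A t * Real.exp x₁} ⊆
      {ω | S 0 ω < A t * Real.exp x₁} ∪
        ⋃ u ∈ Finset.Ico 1 t, {ω | S u ω < A t / A u} := by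
    intro ω hω
    obtain ⟨u, hu, hle⟩ := hD ω
    have hlt : S u ω * A u * (if u = 0 then 1 else Real.exp x₁)
        < A t * Real.exp x₁ := lt_of_le_of_lt hle hω
    rcases Nat.eq_zero_or_pos u with h0 | h1
    · left
      subst h0
      rw [if_pos rfl, hA0, mul_one, mul_one] at hlt
      exact hlt
    · have hut : u < t := by
        by_contra h
        push_neg at h
        rw [if_neg h1.ne'] at hlt
        have hAtu : A t ≤ A u := hAmono h
        have hS := hS1 u ω
        rw [mul_assoc] at hlt
        have e1 : A t * Real.exp x₁ ≤ A u * Real.exp x₁ :=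
          mul_le_mul_of_nonneg_right hAtu hexp.le
        have e2 : A u * Real.exp x₁ ≤ S u ω * (A u * Real.exp x₁) :=
          le_mul_of_one_le_left (mul_nonneg (hApos u).le hexp.le) hS
        linarith
      right
      refine Set.mem_biUnion (Finset.mem_Ico.mpr ⟨h1, hut⟩) ?_
      rw [if_neg h1.ne'] at hlt
      have h2 : S u ω * A u < A t := (mul_lt_mul_iff_of_pos_right hexp).mp hlt
      show S u ω < A t / A u
      rw [lt_div_iff₀ (hApos u)]
      exact h2
  -- measure subadditivity
  have h1 : μ {ω | D ω < A t * Real.exp x₁}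
      ≤ μ {ω | S 0 ω < A t * Real.exp x₁}
        + ∑ u ∈ Finset.Ico 1 t, μ {ω | S u ω < A t / A u} :=
    le_trans (measure_mono hsub)
      (le_trans (measure_union_le _ _)
        (add_le_add_right (measure_biUnion_finset_le _ _) _))
  have hRHSne : μ {ω | S 0 ω < A t * Real.exp x₁}
      + ∑ u ∈ Finset.Ico 1 t, μ {ω | S u ω < A t / A u} ≠ ⊤ := by
    refine ENNReal.add_ne_top.mpr ⟨measure_ne_top μ _, ?_⟩
    exact (ENNReal.sum_ne_top).mpr fun u _ => measure_ne_top μ _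
  have h2 : (μ {ω | D ω < A t * Real.exp x₁}).toReal
      ≤ (μ {ω | S 0 ω < A t * Real.exp x₁}).toReal
        + ∑ u ∈ Finset.Ico 1 t, (μ {ω | S u ω < A t / A u}).toReal := by
    have := ENNReal.toReal_mono hRHSne h1
    rwa [ENNReal.toReal_add (measure_ne_top μ _)
      ((ENNReal.sum_ne_top).mpr fun u _ => measure_ne_top μ _),
      ENNReal.toReal_sum fun u _ => measure_ne_top μ _] at this
  refine le_trans h2 (add_le_add ?_ (Finset.sum_le_sum fun u hu => ?_))
  · -- u = 0 term
    have hc : (0 : ℝ) < A t * Real.exp x₁ := mul_pos (hApos t) hexp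
    have hM := hMellin 0 (Nat.zero_le τ)
    simp only [Nat.sub_zero] at hM
    have := wtb_markov_lt μ (S 0) (hSmeas 0) (hS1 0) s (A t * Real.exp x₁)
      (V ^ τ) hs hc hM
    calc (μ {ω | S 0 ω < A t * Real.exp x₁}).toReal
        ≤ (A t * Real.exp x₁) ^ s * V ^ τ := this
      _ = A t ^ s * Real.exp (s * x₁) * V ^ τ := by
          rw [Real.mul_rpow (hApos t).le hexp.le, ← Real.exp_mul, mul_comm x₁ s]
  · -- 1 ≤ u < t terms
    obtain ⟨h1u, hut⟩ := Finset.mem_Ico.mp hu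
    have huτ : u ≤ τ := by omega
    have hc : (0 : ℝ) < A t / A u := div_pos (hApos t) (hApos u)
    exact wtb_markov_lt μ (S u) (hSmeas u) (hS1 u) s (A t / A u)
      (V ^ (τ - u)) hs hc (hMellin u huτ)
end

section
/- Under the assumptions of the single-hop transient bound, if additionally the arrivals satisfy the (σ,ρ)-bound A(t)/A(u) ≤ e^{σ + ρ(t-u)} for all 0 ≤ u ≤ t, then P(W(t) > w) ≤ min_{s>0} e^{s(x_1 - ρw)} V_0(s)^w [ e^{sσ}·(V_0(s) - V_0(s)^{t+1})/(1 - V_0(s)) + 1 ], where V_0(s) = e^{sρ}V(s) and V_0(s) ≠ 1. -/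
open MeasureTheory

/-- Single-link SOTAT bound under `(σ,ρ)`-bounded arrivals (Corollary 1):
with `V₀ = e^{sρ} V ≠ 1`,
`P(W(t) > w) ≤ e^{s(x₁ - ρw)} V₀^w [ e^{sσ}(V₀ - V₀^{t+1})/(1 - V₀) + 1 ]`
for every `s > 0`, hence for the minimum over `s > 0`. -/
theorem sotat_single_link {Ω : Type*} [MeasurableSpace Ω] (μ : Measure Ω)
    [IsProbabilityMeasure μ]
    (A : ℕ → ℝ) (hA0 : A 0 = 1) (hAmono : Monotone A)
    (X : ℕ → Ω → ℝ) (hX1 : ∀ i ω, 1 ≤ X i ω) (hXmeas : ∀ i, Measurable (X i))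
    (s V : ℝ) (hs : 0 < s) (hV : 0 < V)
    (t w τ : ℕ) (ht : 1 ≤ t) (hτ : τ = t + w)
    (hMellin : ∀ u ≤ τ, ∫ ω, (∏ i ∈ Finset.Ico u τ, X i ω) ^ (-s) ∂μ = V ^ (τ - u))
    (x₁ : ℝ) (hx₁ : 0 ≤ x₁)
    (σ ρ : ℝ) (hσ : 0 ≤ σ) (hρ : 0 ≤ ρ)
    (henv : ∀ u ≤ t, A t / A u ≤ Real.exp (σ + ρ * ((t : ℝ) - (u : ℝ))))
    (hV0 : Real.exp (s * ρ) * V ≠ 1)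
    (D : Ω → ℝ) (hDmeas : Measurable D)
    (hD : ∀ ω, ∃ u ≤ τ, (∏ i ∈ Finset.Ico u τ, X i ω) * A u *
        (if u = 0 then 1 else Real.exp x₁) ≤ D ω) :
    (μ {ω | D ω < A t * Real.exp x₁}).toReal ≤
      Real.exp (s * (x₁ - ρ * w)) * (Real.exp (s * ρ) * V) ^ w *
        (Real.exp (s * σ) *
            ((Real.exp (s * ρ) * V) - (Real.exp (s * ρ) * V) ^ (t + 1)) /
              (1 - Real.exp (s * ρ) * V) + 1) := by
  classical
  set r : ℝ := Real.exp (s * ρ) * V with hr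
  have hA1 : ∀ u, (1 : ℝ) ≤ A u := fun u => hA0 ▸ hAmono (Nat.zero_le u)
  have hApos : ∀ u, (0 : ℝ) < A u := fun u => lt_of_lt_of_le one_pos (hA1 u)
  have hP1 : ∀ u ω, (1 : ℝ) ≤ ∏ i ∈ Finset.Ico u τ, X i ω := fun u ω => by
    have := Finset.prod_le_prod (s := Finset.Ico u τ) (f := fun _ => (1:ℝ))
      (g := fun i => X i ω) (fun i _ => zero_le_one) (fun i _ => hX1 i ω)
    simpa using this
  -- the breakpoint events
  set E : ℕ → Set Ω := fun u => {ω | (∏ i ∈ Finset.Ico u τ, X i ω) * A u *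
      (if u = 0 then 1 else Real.exp x₁) < A t * Real.exp x₁} with hE
  -- the bad event is covered by events with u ≤ t
  have hsub : {ω | D ω < A t * Real.exp x₁} ⊆ ⋃ u ∈ Finset.range (t + 1), E u := by
    intro ω hω
    obtain ⟨u, hu, hle⟩ := hD ω
    have hEu : ω ∈ E u := lt_of_le_of_lt hle hω
    have hut : u ≤ t := by
      by_contra hut
      push_neg at hut
      have hu0 : u ≠ 0 := by omega
      have h1 : A t * Real.exp x₁ ≤ (∏ i ∈ Finset.Ico u τ, X i ω) * A u *
          (if u = 0 then 1 else Real.exp x₁) := by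
        rw [if_neg hu0]
        calc A t * Real.exp x₁ ≤ A u * Real.exp x₁ := by
              have := hAmono hut.le
              exact mul_le_mul_of_nonneg_right this (Real.exp_pos _).le
          _ ≤ (∏ i ∈ Finset.Ico u τ, X i ω) * A u * Real.exp x₁ := by
              have hnn : 0 ≤ A u * Real.exp x₁ :=
                mul_nonneg (hApos u).le (Real.exp_pos _).le
              nlinarith [hP1 u ω]
      exact absurd hEu (by simp only [hE, Set.mem_setOf_eq]; linarith)
    exact Set.mem_biUnion (Finset.mem_range.mpr (by omega)) hEu
  -- Chernoff bound for each event
  have key : ∀ u ≤ t, (μ (E u)).toReal ≤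
      ((A t * Real.exp x₁) / (A u * (if u = 0 then 1 else Real.exp x₁))) ^ s * V ^ (τ - u) := by
    intro u hut
    set c : ℝ := if u = 0 then 1 else Real.exp x₁ with hc
    have hcpos : 0 < c := by
      rw [hc]; split <;> [exact one_pos; exact Real.exp_pos _]
    set a : ℝ := (A t * Real.exp x₁) / (A u * c) with ha
    have hapos : 0 < a :=
      div_pos (mul_pos (hApos t) (Real.exp_pos _)) (mul_pos (hApos u) hcpos)
    set f : Ω → ℝ := fun ω => (∏ i ∈ Finset.Ico u τ, X i ω) ^ (-s) with hf
    have hprodmeas : Measurable fun ω => ∏ i ∈ Finset.Ico u τ, X i ω :=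
      Finset.measurable_prod _ fun i _ => hXmeas i
    have hfeq : f = fun ω => Real.exp (Real.log (∏ i ∈ Finset.Ico u τ, X i ω) * (-s)) :=
      funext fun ω => Real.rpow_def_of_pos (lt_of_lt_of_le one_pos (hP1 u ω)) _
    have hfmeas : Measurable f := by
      rw [hfeq]
      exact Real.measurable_exp.comp ((Real.measurable_log.comp hprodmeas).mul_const _)
    have hf0 : ∀ ω, 0 ≤ f ω := fun ω => Real.rpow_nonneg (le_trans zero_le_one (hP1 u ω)) _
    have hf1 : ∀ ω, f ω ≤ 1 := fun ω =>
      Real.rpow_le_one_of_one_le_of_nonpos (hP1 u ω) (by linarith)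
    have hfint : Integrable f μ := by
      refine (integrable_const (1 : ℝ)).mono' hfmeas.aestronglyMeasurable ?_
      filter_upwards with ω
      rw [Real.norm_eq_abs, abs_of_nonneg (hf0 ω)]
      exact hf1 ω
    have hEsub : E u ⊆ {ω | a ^ (-s) ≤ f ω} := by
      intro ω hω
      simp only [hE, Set.mem_setOf_eq] at hω
      have hPa : (∏ i ∈ Finset.Ico u τ, X i ω) < a := by
        rw [ha, lt_div_iff₀ (mul_pos (hApos u) hcpos)]
        calc (∏ i ∈ Finset.Ico u τ, X i ω) * (A u * c)
            = (∏ i ∈ Finset.Ico u τ, X i ω) * A u * c := by ring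
          _ < A t * Real.exp x₁ := hω
      exact le_of_lt (Real.rpow_lt_rpow_of_neg
        (lt_of_lt_of_le one_pos (hP1 u ω)) hPa (neg_neg_of_pos hs))
    have hmarkov := mul_meas_ge_le_integral_of_nonneg
      (Filter.Eventually.of_forall hf0) hfint (a ^ (-s)) (μ := μ)
    rw [hMellin u (by omega)] at hmarkov
    have hεpos : 0 < a ^ (-s) := Real.rpow_pos_of_pos hapos _
    have h1 : (μ (E u)).toReal ≤ (μ {ω | a ^ (-s) ≤ f ω}).toReal := by
      apply ENNReal.toReal_mono (measure_ne_top _ _)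
      exact measure_mono hEsub
    have h2 : (μ {ω | a ^ (-s) ≤ f ω}).toReal ≤ V ^ (τ - u) / a ^ (-s) := by
      rw [le_div_iff₀ hεpos]
      rw [mul_comm]; exact hmarkov
    have h3 : V ^ (τ - u) / a ^ (-s) = a ^ s * V ^ (τ - u) := by
      rw [Real.rpow_neg hapos.le, div_eq_mul_inv, inv_inv, mul_comm]
    exact le_trans h1 (h2.trans_eq h3)
  -- union bound
  have hunion : (μ {ω | D ω < A t * Real.exp x₁}).toReal ≤
      ∑ u ∈ Finset.range (t + 1),
        ((A t * Real.exp x₁) / (A u * (if u = 0 then 1 else Real.exp x₁))) ^ s * V ^ (τ - u) := by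
    have h1 : μ {ω | D ω < A t * Real.exp x₁} ≤ ∑ u ∈ Finset.range (t + 1), μ (E u) :=
      (measure_mono hsub).trans (measure_biUnion_finset_le _ _)
    have h2 : (μ {ω | D ω < A t * Real.exp x₁}).toReal ≤
        ∑ u ∈ Finset.range (t + 1), (μ (E u)).toReal := by
      rw [← ENNReal.toReal_sum (fun u _ => measure_ne_top _ _)]
      exact ENNReal.toReal_mono
        (ENNReal.sum_lt_top.mpr fun u _ => measure_lt_top _ _).ne h1
    exact h2.trans (Finset.sum_le_sum fun u hu => key u (by
      simpa using Nat.lt_succ_iff.mp (Finset.mem_range.mp hu)))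
  -- bound each term for u < t
  have hterm : ∀ u < t,
      ((A t * Real.exp x₁) / (A u * (if u = 0 then 1 else Real.exp x₁))) ^ s * V ^ (τ - u) ≤
      Real.exp (s * σ) * Real.exp (s * x₁) * V ^ w * r ^ (t - u) := by
    intro u hut
    set c : ℝ := if u = 0 then 1 else Real.exp x₁ with hc
    have hcpos : 0 < c := by rw [hc]; split <;> [exact one_pos; exact Real.exp_pos _]
    have hc1 : 1 ≤ Real.exp x₁ / c := by
      rw [hc]; split
      · simpa using Real.one_le_exp hx₁
      · rw [div_self (Real.exp_ne_zero _)]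
    have hanat : ((t : ℝ) - (u : ℝ)) = ((t - u : ℕ) : ℝ) := by
      push_cast [Nat.cast_sub hut.le]; ring
    have haB : (A t * Real.exp x₁) / (A u * c) ≤
        Real.exp (σ + ρ * ((t - u : ℕ) : ℝ) + x₁) := by
      have h1 : (A t * Real.exp x₁) / (A u * c) = (A t / A u) * (Real.exp x₁ / c) := by
        field_simp
      rw [h1, Real.exp_add]
      have h2 := henv u hut.le
      rw [hanat] at h2
      have h3 : Real.exp x₁ / c ≤ Real.exp x₁ := by
        rw [hc]; split
        · simp
        · rw [div_self (Real.exp_ne_zero _)]; exact Real.one_le_exp hx₁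
      have hd : 0 ≤ A t / A u := div_nonneg (hApos t).le (hApos u).le
      exact mul_le_mul h2 h3 (div_nonneg (Real.exp_pos _).le hcpos.le) (Real.exp_pos _).le
    have haBs : ((A t * Real.exp x₁) / (A u * c)) ^ s ≤
        Real.exp (s * (σ + ρ * ((t - u : ℕ) : ℝ) + x₁)) := by
      have := Real.rpow_le_rpow
        (div_nonneg (mul_nonneg (hApos t).le (Real.exp_pos _).le)
          (mul_pos (hApos u) hcpos).le) haB hs.le
      rwa [← Real.exp_mul, mul_comm (σ + ρ * ((t - u : ℕ) : ℝ) + x₁) s] at this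
    have hτu : τ - u = (t - u) + w := by omega
    have hVsplit : V ^ (τ - u) = V ^ (t - u) * V ^ w := by rw [hτu, pow_add]
    have hexpand : Real.exp (s * (σ + ρ * ((t - u : ℕ) : ℝ) + x₁)) =
        Real.exp (s * σ) * Real.exp (s * x₁) * (Real.exp (s * ρ)) ^ (t - u) := by
      rw [← Real.exp_nat_mul, ← Real.exp_add, ← Real.exp_add]
      ring_nf
    have hVnn : (0:ℝ) ≤ V ^ (τ - u) := pow_nonneg hV.le _
    calc ((A t * Real.exp x₁) / (A u * c)) ^ s * V ^ (τ - u)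
        ≤ Real.exp (s * (σ + ρ * ((t - u : ℕ) : ℝ) + x₁)) * V ^ (τ - u) :=
          mul_le_mul_of_nonneg_right haBs hVnn
      _ = Real.exp (s * σ) * Real.exp (s * x₁) * V ^ w * r ^ (t - u) := by
          rw [hexpand, hVsplit, hr, mul_pow]; ring
  -- the term u = t is exactly V ^ w
  have htermt : ((A t * Real.exp x₁) / (A t * (if t = 0 then 1 else Real.exp x₁))) ^ s *
      V ^ (τ - t) = V ^ w := by
    have ht0 : t ≠ 0 := by omega
    rw [if_neg ht0, div_self (ne_of_gt (mul_pos (hApos t) (Real.exp_pos _))),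
      Real.one_rpow, one_mul, show τ - t = w by omega]
  -- sum the geometric series
  have hgeom : ∑ u ∈ Finset.range t, r ^ (t - u) = (r - r ^ (t + 1)) / (1 - r) := by
    have h1 : ∑ u ∈ Finset.range t, r ^ (t - u) = ∑ u ∈ Finset.range t, r ^ (u + 1) := by
      rw [← Finset.sum_range_reflect]
      apply Finset.sum_congr rfl
      intro j hj
      have hjt : j < t := Finset.mem_range.mp hj
      congr 1
      omega
    rw [h1]
    have h2 : ∑ u ∈ Finset.range t, r ^ (u + 1) = (∑ u ∈ Finset.range t, r ^ u) * r := by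
      rw [Finset.sum_mul]
      exact Finset.sum_congr rfl fun u _ => by rw [pow_succ]
    rw [h2, geom_sum_eq hV0]
    have hne : r - 1 ≠ 0 := sub_ne_zero.mpr hV0
    have hne' : (1:ℝ) - r ≠ 0 := sub_ne_zero.mpr (Ne.symm hV0)
    field_simp
    ring
  -- assemble
  have hRHSeq : Real.exp (s * (x₁ - ρ * w)) * r ^ w = Real.exp (s * x₁) * V ^ w := by
    rw [hr, mul_pow, ← Real.exp_nat_mul, ← mul_assoc, ← Real.exp_add,
      show s * (x₁ - ρ * (w:ℝ)) + (w:ℝ) * (s * ρ) = s * x₁ by ring]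
  have hmain : ∑ u ∈ Finset.range (t + 1),
      ((A t * Real.exp x₁) / (A u * (if u = 0 then 1 else Real.exp x₁))) ^ s * V ^ (τ - u) ≤
      Real.exp (s * x₁) * V ^ w *
        (Real.exp (s * σ) * ((r - r ^ (t + 1)) / (1 - r)) + 1) := by
    rw [Finset.sum_range_succ, htermt]
    have h1 : ∑ u ∈ Finset.range t,
        ((A t * Real.exp x₁) / (A u * (if u = 0 then 1 else Real.exp x₁))) ^ s * V ^ (τ - u) ≤
        ∑ u ∈ Finset.range t,
          Real.exp (s * σ) * Real.exp (s * x₁) * V ^ w * r ^ (t - u) :=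
      Finset.sum_le_sum fun u hu => hterm u (Finset.mem_range.mp hu)
    have h2 : ∑ u ∈ Finset.range t,
        Real.exp (s * σ) * Real.exp (s * x₁) * V ^ w * r ^ (t - u) =
        Real.exp (s * σ) * Real.exp (s * x₁) * V ^ w * ((r - r ^ (t + 1)) / (1 - r)) := by
      rw [← Finset.mul_sum, hgeom]
    have h3 : V ^ w ≤ Real.exp (s * x₁) * V ^ w := by
      nlinarith [pow_nonneg hV.le w, Real.one_le_exp (by positivity : 0 ≤ s * x₁)]
    calc _ ≤ Real.exp (s * σ) * Real.exp (s * x₁) * V ^ w * ((r - r ^ (t + 1)) / (1 - r))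
            + V ^ w := by rw [← h2]; linarith
      _ ≤ _ := by ring_nf; nlinarith [h3]
  calc (μ {ω | D ω < A t * Real.exp x₁}).toReal
      ≤ ∑ u ∈ Finset.range (t + 1),
        ((A t * Real.exp x₁) / (A u * (if u = 0 then 1 else Real.exp x₁))) ^ s *
          V ^ (τ - u) := hunion
    _ ≤ Real.exp (s * x₁) * V ^ w *
        (Real.exp (s * σ) * ((r - r ^ (t + 1)) / (1 - r)) + 1) := hmain
    _ = Real.exp (s * (x₁ - ρ * w)) * r ^ w *
        (Real.exp (s * σ) * (r - r ^ (t + 1)) / (1 - r) + 1) := by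
        rw [hRHSeq]; ring
end
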